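/- Let $B$ be a simplicial set, $G$ a group, and $\tau$ a function from the positive-dimensional simplices of $B$ to $G$ satisfying: $\tau(b) = \tau(d_0 b)^{-1}\tau(d_1 b)$ for $b \in B_q$, $q > 1$; $\tau(d_i b) = \tau(b)$ for $i \geq 2$; $\tau(s_i b) = \tau(b)$ for $i \geq 1$; and $\tau(s_0 b) = e_G$. Let $R$ be a commutative ring, $A$ a commutative $R$-algebra on which $G$ acts by $R$-algebra isomorphisms. Define $\mathcal{L}^R_B(A^\tau)_n = \bigotimes_{b \in B_n} A$ (tensor over $R$) with face map $d_0$ twisted by $\tau$ (i.e., $d_0$ sends $\bigotimes_b f_b$ to $\bigotimes_c \prod_{b: d_0 b = c} \tau(b)(f_b)$), untwisted faces $d_i$ for $i \geq 1$ given by multiplication along $d_i$ of $B$, and degeneracies given by insertion of units. Then these structure maps satisfy the simplicial identities, so $\mathcal{L}^R_B(A^\tau)$ is a simplicial commutative $R$-algebra. -/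

import Mathlib

/-!
STATEMENT 2: The twisted Loday construction `𝓛^R_B(A^τ)` is a simplicial commutative
`R`-algebra: its structure maps satisfy the simplicial identities.

We use the monomial (pure-tensor) model of `⨂_{b ∈ Bₙ} A`: a pure tensor is a family
`f : Bₙ → A`, the twisted face map `d₀` sends `⨂_b f_b` to `⨂_c ∏_{b : d₀b = c} τ(b)(f_b)`,
the untwisted faces `dᵢ` (`i ≥ 1`) multiply the factors along the fibers of `dᵢ` of `B`,
and the degeneracies distribute factors along `sᵢ`, inserting units elsewhere.  The
simplicial identities are stated in Mathlib's `δ`/`σ` form (`δ_comp_δ`, `σ_comp_σ`,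
`δ_comp_σ_of_le`, `δ_comp_σ_self`, `δ_comp_σ_succ`, `δ_comp_σ_of_gt`).

Convention: `τ q : B _[q+1] → G` is the twisting on simplices of dimension `q+1`.
-/

open CategoryTheory Simplicial Finset

lemma fiber_prod {X Y Z M : Type*} [CommMonoid M]
    [Fintype X] [Fintype Y] [DecidableEq Y] [DecidableEq Z]
    (φ : X → Y) (ψ : Y → Z) (h : X → M) (z : Z) :
    ∏ y ∈ univ.filter (fun y => ψ y = z), ∏ x ∈ univ.filter (fun x => φ x = y), h x
      = ∏ x ∈ univ.filter (fun x => ψ (φ x) = z), h x := by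
  rw [← Finset.prod_fiberwise_of_maps_to (g := φ)
      (t := univ.filter (fun y => ψ y = z))
      (s := univ.filter (fun x => ψ (φ x) = z))
      (fun x hx => by
        simp only [mem_filter, mem_univ, true_and] at hx ⊢; exact hx) h]
  refine Finset.prod_congr rfl (fun y hy => ?_)
  refine Finset.prod_congr ?_ (fun _ _ => rfl)
  simp only [mem_filter, mem_univ, true_and] at hy
  ext x
  simp only [mem_filter, mem_univ, true_and]
  exact ⟨fun hxy => ⟨by rw [hxy, hy], hxy⟩, fun h => h.2⟩

lemma fiber_prod_tw {X Y Z : Type*} {R A : Type*} [CommRing R] [CommRing A] [Algebra R A]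
    [Fintype X] [Fintype Y] [DecidableEq Y] [DecidableEq Z]
    (φ : X → Y) (ψ : Y → Z) (e : Y → (A ≃ₐ[R] A)) (h : X → A) (z : Z) :
    ∏ y ∈ univ.filter (fun y => ψ y = z),
        e y (∏ x ∈ univ.filter (fun x => φ x = y), h x)
      = ∏ x ∈ univ.filter (fun x => ψ (φ x) = z), e (φ x) (h x) := by
  rw [← fiber_prod φ ψ (fun x => e (φ x) (h x)) z]
  refine Finset.prod_congr rfl (fun y _ => ?_)
  rw [map_prod]
  exact Finset.prod_congr rfl (fun x hx => by
    simp only [mem_filter, mem_univ, true_and] at hx; rw [hx])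

theorem twisted_loday_is_simplicial
    (R A : Type) [CommRing R] [CommRing A] [Algebra R A]
    (G : Type) [Group G] (act : G →* (A ≃ₐ[R] A))
    (B : SSet) [∀ n : ℕ, Fintype (B _⦋n⦌)] [∀ n : ℕ, DecidableEq (B _⦋n⦌)]
    (τ : ∀ q : ℕ, B _⦋q + 1⦌ → G)
    (hτ₁ : ∀ (q : ℕ) (b : B _⦋q + 2⦌),
      τ (q + 1) b = (τ q (B.δ 0 b))⁻¹ * τ q (B.δ 1 b))
    (hτ₂ : ∀ (q : ℕ) (b : B _⦋q + 2⦌) (i : Fin (q + 3)), 2 ≤ (i : ℕ) →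
      τ q (B.δ i b) = τ (q + 1) b)
    (hτ₃ : ∀ (q : ℕ) (b : B _⦋q + 1⦌) (i : Fin (q + 2)), 1 ≤ (i : ℕ) →
      τ (q + 1) (B.σ i b) = τ q b)
    (hτ₄ : ∀ (q : ℕ) (b : B _⦋q + 1⦌), τ (q + 1) (B.σ 0 b) = 1)
    -- the (possibly twisted) face maps of `𝓛^R_B(A^τ)` on pure tensors
    (D : ∀ n : ℕ, Fin (n + 2) → (B _⦋n + 1⦌ → A) → (B _⦋n⦌ → A))
    (hD : ∀ n i f c, D n i f c =
      ∏ b ∈ univ.filter (fun b => B.δ i b = c),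
        (if (i : ℕ) = 0 then act (τ n b) (f b) else f b))
    -- the degeneracy maps of `𝓛^R_B(A^τ)` on pure tensors
    (S : ∀ n : ℕ, Fin (n + 1) → (B _⦋n⦌ → A) → (B _⦋n + 1⦌ → A))
    (hS : ∀ n i f d, S n i f d = ∏ b ∈ univ.filter (fun b => B.σ i b = d), f b) :
    -- simplicial identities
    (∀ (n : ℕ) (i j : Fin (n + 2)), i ≤ j → ∀ f : B _⦋n + 2⦌ → A,
      D n i (D (n + 1) j.succ f) = D n j (D (n + 1) i.castSucc f)) ∧
    (∀ (n : ℕ) (i j : Fin (n + 1)), i ≤ j → ∀ f : B _⦋n⦌ → A,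
      S (n + 1) i.castSucc (S n j f) = S (n + 1) j.succ (S n i f)) ∧
    (∀ (n : ℕ) (i : Fin (n + 2)) (j : Fin (n + 1)), i ≤ j.castSucc →
      ∀ f : B _⦋n + 1⦌ → A,
      D (n + 1) i.castSucc (S (n + 1) j.succ f) = S n j (D n i f)) ∧
    (∀ (n : ℕ) (i : Fin (n + 1)) (f : B _⦋n⦌ → A),
      D n i.castSucc (S n i f) = f ∧ D n i.succ (S n i f) = f) ∧
    (∀ (n : ℕ) (i : Fin (n + 2)) (j : Fin (n + 1)), j.castSucc < i →
      ∀ f : B _⦋n + 1⦌ → A,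
      D (n + 1) i.succ (S (n + 1) j.castSucc f) = S n j (D n i f)) := by
  -- reformulate `D` with the twist as an `AlgEquiv`
  have hD' : ∀ (n : ℕ) (i : Fin (n + 2)) (f : B _⦋n + 1⦌ → A) (c : B _⦋n⦌),
      D n i f c = ∏ b ∈ univ.filter (fun b => B.δ i b = c),
        (if (i : ℕ) = 0 then act (τ n b) else 1) (f b) := by
    intro n i f c
    rw [hD]
    refine Finset.prod_congr rfl (fun b _ => ?_)
    split_ifs <;> simp
  -- τ vanishes on all degenerate 1-simplices, including over dimension 0
  have hτ₀ : ∀ (n : ℕ) (c : B _⦋n⦌), τ n (B.σ 0 c) = 1 := by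
    intro n c
    cases n with
    | succ q => exact hτ₄ q c
    | zero =>
      set x : B _⦋1⦌ := B.σ 0 c with hx
      have h1 : τ 1 (B.σ (1 : Fin 2) x) = τ 0 x := hτ₃ 0 x 1 (by norm_num)
      have h2 := hτ₁ 0 (B.σ (1 : Fin 2) x)
      have h3 : B.δ (0 : Fin 3) (B.σ (1 : Fin 2) x) = B.σ (0 : Fin 1) (B.δ (0 : Fin 2) x) := by
        have h := ConcreteCategory.congr_hom (SimplicialObject.δ_comp_σ_of_le (X := B)
          (i := (0 : Fin 2)) (j := (0 : Fin 1)) (by simp)) x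
        simpa using h
      have h4 : B.δ (1 : Fin 3) (B.σ (1 : Fin 2) x) = x := by
        have h := ConcreteCategory.congr_hom (SimplicialObject.δ_comp_σ_self (X := B) (i := (1 : Fin 2))) x
        simpa using h
      have h5 : B.δ (0 : Fin 2) x = c := by
        have h := ConcreteCategory.congr_hom (SimplicialObject.δ_comp_σ_self (X := B) (i := (0 : Fin 1))) c
        simpa [hx] using h
      rw [h1, h3, h4, h5] at h2
      exact inv_eq_one.mp (right_eq_mul.mp h2)
  -- composite formulas
  have DD : ∀ (n : ℕ) (i : Fin (n + 2)) (j : Fin (n + 3)) (f : B _⦋n + 2⦌ → A) (c : B _⦋n⦌),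
      D n i (D (n + 1) j f) c = ∏ b ∈ univ.filter (fun b => B.δ i (B.δ j b) = c),
        (if (i : ℕ) = 0 then act (τ n (B.δ j b)) else 1)
          ((if (j : ℕ) = 0 then act (τ (n + 1) b) else 1) (f b)) := by
    intro n i j f c
    rw [hD']
    refine Eq.trans (Finset.prod_congr rfl (fun y _ => by rw [hD'])) ?_
    exact fiber_prod_tw (fun b => B.δ j b) (fun y => B.δ i y)
      (fun y => if (i : ℕ) = 0 then act (τ n y) else 1)
      (fun b => (if (j : ℕ) = 0 then act (τ (n + 1) b) else 1) (f b)) c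
  have SS : ∀ (n : ℕ) (i : Fin (n + 2)) (j : Fin (n + 1)) (f : B _⦋n⦌ → A) (d : B _⦋n + 2⦌),
      S (n + 1) i (S n j f) d = ∏ b ∈ univ.filter (fun b => B.σ i (B.σ j b) = d), f b := by
    intro n i j f d
    rw [hS]
    refine Eq.trans (Finset.prod_congr rfl (fun y _ => by rw [hS])) ?_
    exact fiber_prod (fun b => B.σ j b) (fun y => B.σ i y) f d
  have DS : ∀ (n : ℕ) (i : Fin (n + 2)) (j : Fin (n + 1)) (f : B _⦋n⦌ → A) (c : B _⦋n⦌),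
      D n i (S n j f) c = ∏ b ∈ univ.filter (fun b => B.δ i (B.σ j b) = c),
        (if (i : ℕ) = 0 then act (τ n (B.σ j b)) else 1) (f b) := by
    intro n i j f c
    rw [hD']
    refine Eq.trans (Finset.prod_congr rfl (fun y _ => by rw [hS])) ?_
    exact fiber_prod_tw (fun b => B.σ j b) (fun y => B.δ i y)
      (fun y => if (i : ℕ) = 0 then act (τ n y) else 1) f c
  have SD : ∀ (n : ℕ) (i : Fin (n + 2)) (j : Fin (n + 1)) (f : B _⦋n + 1⦌ → A) (c : B _⦋n + 1⦌),
      S n j (D n i f) c = ∏ b ∈ univ.filter (fun b => B.σ j (B.δ i b) = c),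
        (if (i : ℕ) = 0 then act (τ n b) else 1) (f b) := by
    intro n i j f c
    rw [hS]
    refine Eq.trans (Finset.prod_congr rfl (fun y _ => by rw [hD'])) ?_
    exact fiber_prod (fun b => B.δ i b) (fun y => B.σ j y)
      (fun b => (if (i : ℕ) = 0 then act (τ n b) else 1) (f b)) c
  refine ⟨?_, ?_, ?_, ?_, ?_⟩
  -- (1) δδ
  · intro n i j hij f
    funext c
    rw [DD n i j.succ f c, DD n j i.castSucc f c]
    refine Finset.prod_congr ?_ (fun b _ => ?_)
    · ext b
      have hb : B.δ i (B.δ j.succ b) = B.δ j (B.δ i.castSucc b) :=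
        ConcreteCategory.congr_hom (SimplicialObject.δ_comp_δ (X := B) hij) b
      simp only [mem_filter, mem_univ, true_and, hb]
    · by_cases hi : (i : ℕ) = 0
      · by_cases hj : (j : ℕ) = 0
        · have hi0 : i = 0 := Fin.ext hi
          have hj0 : j = 0 := Fin.ext hj
          subst hi0; subst hj0
          simp only [Fin.succ_zero_eq_one, Fin.castSucc_zero, Fin.val_zero, Fin.val_one,
            one_ne_zero, if_true, if_false, reduceIte, AlgEquiv.one_apply]
          rw [← AlgEquiv.mul_apply, ← map_mul, hτ₁ n b, mul_inv_cancel_left]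
        · have h1 : ¬ (((j.succ : Fin (n + 3)) : ℕ) = 0) := by simp [Fin.val_succ]
          have h2 : (((i.castSucc : Fin (n + 3)) : ℕ) = 0) := by
            simpa [Fin.coe_castSucc] using hi
          have h2le : 2 ≤ ((j.succ : Fin (n + 3)) : ℕ) := by
            simp only [Fin.val_succ]; omega
          rw [if_pos hi, if_neg h1, if_neg hj, if_pos h2, AlgEquiv.one_apply,
            AlgEquiv.one_apply, hτ₂ n b j.succ h2le]
      · have hjne : ¬ (j : ℕ) = 0 := by
          have := Fin.le_iff_val_le_val.mp hij; omega
        have h1 : ¬ (((j.succ : Fin (n + 3)) : ℕ) = 0) := by simp [Fin.val_succ]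
        have h2 : ¬ (((i.castSucc : Fin (n + 3)) : ℕ) = 0) := by
          simpa [Fin.coe_castSucc] using hi
        rw [if_neg hi, if_neg h1, if_neg hjne, if_neg h2]
  -- (2) σσ
  · intro n i j hij f
    funext d
    rw [SS n i.castSucc j f d, SS n j.succ i f d]
    refine Finset.prod_congr ?_ (fun b _ => rfl)
    ext b
    have hb : B.σ i.castSucc (B.σ j b) = B.σ j.succ (B.σ i b) :=
      ConcreteCategory.congr_hom (SimplicialObject.σ_comp_σ (X := B) hij) b
    simp only [mem_filter, mem_univ, true_and, hb]
  -- (3) δσ, i ≤ j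
  · intro n i j hij f
    funext c
    rw [DS (n + 1) i.castSucc j.succ f c, SD n i j f c]
    refine Finset.prod_congr ?_ (fun b _ => ?_)
    · ext b
      have hb : B.δ i.castSucc (B.σ j.succ b) = B.σ j (B.δ i b) :=
        ConcreteCategory.congr_hom (SimplicialObject.δ_comp_σ_of_le (X := B) hij) b
      simp only [mem_filter, mem_univ, true_and, hb]
    · by_cases hi : (i : ℕ) = 0
      · rw [if_pos (by simpa [Fin.coe_castSucc] using hi), if_pos hi,
          hτ₃ n b j.succ (by simp [Fin.val_succ])]
      · rw [if_neg (by simpa [Fin.coe_castSucc] using hi), if_neg hi]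
  -- (4) δσ self / succ
  · intro n i f
    constructor
    · funext c
      rw [DS n i.castSucc i f c]
      have hb : ∀ b : B _⦋n⦌, B.δ i.castSucc (B.σ i b) = b := fun b =>
        ConcreteCategory.congr_hom (SimplicialObject.δ_comp_σ_self (X := B) (i := i)) b
      simp only [hb]
      have hsing : (univ.filter (fun b : (B.obj (Opposite.op (SimplexCategory.mk n))) => b = c)) = {c} := by ext b; simp
      rw [hsing, Finset.prod_singleton]
      by_cases hi : ((i.castSucc : Fin (n + 2)) : ℕ) = 0
      · have hi0 : i = 0 := Fin.ext (by simpa [Fin.coe_castSucc] using hi)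
        subst hi0
        rw [if_pos hi, hτ₀ n c, map_one, AlgEquiv.one_apply]
      · rw [if_neg hi, AlgEquiv.one_apply]
    · funext c
      rw [DS n i.succ i f c]
      have hb : ∀ b : B _⦋n⦌, B.δ i.succ (B.σ i b) = b := fun b =>
        ConcreteCategory.congr_hom (SimplicialObject.δ_comp_σ_succ (X := B) (i := i)) b
      simp only [hb]
      have hsing : (univ.filter (fun b : (B.obj (Opposite.op (SimplexCategory.mk n))) => b = c)) = {c} := by ext b; simp
      rw [hsing, Finset.prod_singleton, if_neg (by simp [Fin.val_succ] :
        ¬ (((i.succ : Fin (n + 2)) : ℕ) = 0)), AlgEquiv.one_apply]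
  -- (5) δσ, j < i
  · intro n i j hij f
    funext c
    rw [DS (n + 1) i.succ j.castSucc f c, SD n i j f c]
    refine Finset.prod_congr ?_ (fun b _ => ?_)
    · ext b
      have hb : B.δ i.succ (B.σ j.castSucc b) = B.σ j (B.δ i b) :=
        ConcreteCategory.congr_hom (SimplicialObject.δ_comp_σ_of_gt (X := B) hij) b
      simp only [mem_filter, mem_univ, true_and, hb]
    · have hine : ¬ (i : ℕ) = 0 := by
        have := Fin.lt_iff_val_lt_val.mp hij; omega
      rw [if_neg (by simp [Fin.val_succ]), if_neg hine]
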